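/- arXiv:2411.00759 — 2 statements merged into one kernel-verified Lean document; each statement's English description precedes it below -/
import Mathlib

section
/- For the convex interpolant conditional flow p_t^i(x^i|x_0,x_1) = (1 − κ_t) δ_{x_0^i}(x^i) + κ_t δ_{x_1^i}(x^i) with κ differentiable and κ_t < 1, the velocity u_t^i(x^i, z | x_0, x_1) = (κ̇_t / (1 − κ_t)) [δ_{x_1^i}(x^i) − δ_{z^i}(x^i)] satisfies the continuity (Kolmogorov) equation: d/dt p_t^i(x^i|x_0,x_1) = ∑_{z^i ∈ [V]} u_t^i(x^i, z | x_0, x_1) p_t^i(z^i|x_0,x_1), where u_t^i depends on z only through z^i. -/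
/-- The convex interpolant conditional flow
`p_t^i(v|x_0,x_1) = (1 − κ_t) δ_{x_0^i}(v) + κ_t δ_{x_1^i}(v)` together with the velocity
`u_t^i(v, z) = (κ̇_t / (1 − κ_t)) [δ_{x_1^i}(v) − δ_{z^i}(v)]` (which depends on `z` only
through `z^i`) satisfies the continuity (Kolmogorov) equation:
`d/dt p_t^i(v) = ∑_{z^i ∈ [V]} u_t^i(v, z) p_t^i(z^i)`. -/
theorem stmt6 (V L : ℕ) (κ : ℝ → ℝ) (x0 x1 : Fin L → Fin V) (i : Fin L)
    (t : ℝ) (hdiff : DifferentiableAt ℝ κ t) (hlt : κ t < 1) (v : Fin V) :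
    HasDerivAt
      (fun τ : ℝ =>
        (1 - κ τ) * (if v = x0 i then (1:ℝ) else 0) + κ τ * (if v = x1 i then 1 else 0))
      (∑ zi : Fin V,
        (deriv κ t / (1 - κ t)) *
            ((if v = x1 i then (1:ℝ) else 0) - (if v = zi then 1 else 0)) *
          ((1 - κ t) * (if zi = x0 i then (1:ℝ) else 0) + κ t * (if zi = x1 i then 1 else 0)))
      t := by
  have h1 : (1:ℝ) - κ t ≠ 0 := by linarith
  have key : (∑ zi : Fin V,
        (deriv κ t / (1 - κ t)) *
            ((if v = x1 i then (1:ℝ) else 0) - (if v = zi then 1 else 0)) *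
          ((1 - κ t) * (if zi = x0 i then (1:ℝ) else 0) + κ t * (if zi = x1 i then 1 else 0)))
      = deriv κ t * ((if v = x1 i then (1:ℝ) else 0) - (if v = x0 i then 1 else 0)) := by
    simp only [mul_add, mul_sub, sub_mul, add_mul, mul_ite, ite_mul, mul_one, mul_zero,
      one_mul, zero_mul, Finset.sum_sub_distrib, Finset.sum_add_distrib,
      Finset.sum_ite_eq, Finset.sum_ite_eq', Finset.mem_univ, if_true]
    split_ifs <;> field_simp <;> ring
  rw [key]
  have h := hdiff.hasDerivAt
  have H := ((h.const_sub 1).mul_const (if v = x0 i then (1:ℝ) else 0)).add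
    (h.mul_const (if v = x1 i then (1:ℝ) else 0))
  refine H.congr_deriv ?_
  ring
end

section
/- Let π be a joint probability distribution on [V]^L × [V]^L, let κ: [0,1] → [0,1] be C¹ with κ_0 = 0, κ_1 = 1, κ_t < 1 for t < 1, and define the marginal flow p_t(x) = ∑_{x_0,x_1} p_t(x|x_0,x_1) π(x_0,x_1) with p_t(x|x_0,x_1) = ∏_i [(1−κ_t)δ_{x_0^i}(x^i) + κ_t δ_{x_1^i}(x^i)], conditional velocities u_t^i(x^i,z|x_0,x_1) = (κ̇_t/(1−κ_t))[δ_{x_1^i}(x^i) − δ_{z^i}(x^i)], and unconditional velocity u_t^i(x^i,z) = ∑_{x_0,x_1} u_t^i(x^i,z|x_0,x_1) π(x_0,x_1|z) where π(x_0,x_1|z) = p_t(z|x_0,x_1)π(x_0,x_1)/p_t(z). Let s: [V] × [V] → [0,∞) be a function with s(a,a) = 0 for all a. Then ∫_0^1 ∑_z p_t(z) ∑_{i=1}^L ∑_{x^i ≠ z^i} u_t^i(x^i,z) s(x^i, z^i) dt = ∑_{x_0,x_1} [∑_{i=1}^L s(x_1^i, x_0^i)] π(x_0, x_1). -/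
open Finset

noncomputable section

/-- `δ_b(a)` as a real number. -/
def dlt {V : ℕ} (a b : Fin V) : ℝ := if a = b then 1 else 0

/-- Convex interpolant conditional flow
`p_t(x|x_0,x_1) = ∏ i, [(1−κ_t) δ_{x_0^i}(x^i) + κ_t δ_{x_1^i}(x^i)]`. -/
def pcond {V L : ℕ} (κ : ℝ → ℝ) (t : ℝ) (x x0 x1 : Fin L → Fin V) : ℝ :=
  ∏ i, ((1 - κ t) * dlt (x i) (x0 i) + κ t * dlt (x i) (x1 i))

/-- Marginal flow `p_t(x) = ∑_{x_0,x_1} p_t(x|x_0,x_1) π(x_0,x_1)`. -/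
def pmarg {V L : ℕ} (κ : ℝ → ℝ) (π : (Fin L → Fin V) × (Fin L → Fin V) → ℝ)
    (t : ℝ) (x : Fin L → Fin V) : ℝ :=
  ∑ x0, ∑ x1, pcond κ t x x0 x1 * π (x0, x1)

/-- Unconditional velocity
`u_t^i(a,z) = ∑_{x_0,x_1} u_t^i(a,z|x_0,x_1) π(x_0,x_1|z)`, where the conditional
velocity is `u_t^i(a,z|x_0,x_1) = (κ̇_t/(1−κ_t))[δ_{x_1^i}(a) − δ_{z^i}(a)]` and
`π(x_0,x_1|z) = p_t(z|x_0,x_1) π(x_0,x_1) / p_t(z)`. -/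
def uvel {V L : ℕ} (κ : ℝ → ℝ) (π : (Fin L → Fin V) × (Fin L → Fin V) → ℝ)
    (t : ℝ) (i : Fin L) (a : Fin V) (z : Fin L → Fin V) : ℝ :=
  ∑ x0, ∑ x1,
    (deriv κ t / (1 - κ t)) * (dlt a (x1 i) - dlt a (z i)) *
      (pcond κ t z x0 x1 * π (x0, x1) / pmarg κ π t z)

section Aux

variable {V L : ℕ}

lemma sum_dlt (c : Fin V) : ∑ b, dlt b c = 1 := by
  simp [dlt]

lemma pcond_nonneg {κ : ℝ → ℝ} {t : ℝ} (h0 : 0 ≤ κ t) (h1 : κ t ≤ 1)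
    (z x0 x1 : Fin L → Fin V) : 0 ≤ pcond κ t z x0 x1 := by
  refine Finset.prod_nonneg fun i _ => add_nonneg (mul_nonneg (by linarith) ?_)
    (mul_nonneg h0 ?_) <;> · unfold dlt; positivity

lemma pmarg_zero {κ : ℝ → ℝ} {t : ℝ} (h0 : 0 ≤ κ t) (h1 : κ t ≤ 1)
    (π : (Fin L → Fin V) × (Fin L → Fin V) → ℝ) (hπ : ∀ p, 0 ≤ π p)
    {z : Fin L → Fin V} (hz : pmarg κ π t z = 0) (x0 x1 : Fin L → Fin V) :
    pcond κ t z x0 x1 * π (x0, x1) = 0 := by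
  have hnn : ∀ x0 x1 : Fin L → Fin V, 0 ≤ pcond κ t z x0 x1 * π (x0, x1) :=
    fun x0 x1 => mul_nonneg (pcond_nonneg h0 h1 _ _ _) (hπ _)
  have h1' := (Finset.sum_eq_zero_iff_of_nonneg
    (fun x0 _ => Finset.sum_nonneg fun x1 _ => hnn x0 x1)).1 hz x0 (mem_univ _)
  exact (Finset.sum_eq_zero_iff_of_nonneg (fun x1 _ => hnn x0 x1)).1 h1' x1 (mem_univ _)

lemma asum (s : Fin V → Fin V → ℝ) (hs0 : ∀ a, s a a = 0) (zi x1i : Fin V) :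
    ∑ a ∈ univ.filter (· ≠ zi), (dlt a x1i - dlt a zi) * s a zi = s x1i zi := by
  rcases eq_or_ne x1i zi with h | h
  · subst h
    rw [hs0]
    exact Finset.sum_eq_zero fun a ha => by simp at ha; simp [dlt, ha]
  · rw [Finset.sum_eq_single x1i]
    · simp [dlt, h]
    · intro a ha hne
      simp only [mem_filter] at ha
      simp [dlt, hne, ha.2]
    · intro hx; exact absurd (by simp [h]) hx

lemma zsum (κ : ℝ → ℝ) (t : ℝ) (s : Fin V → Fin V → ℝ) (hs0 : ∀ a, s a a = 0)
    (x0 x1 : Fin L → Fin V) (i : Fin L) :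
    ∑ z : Fin L → Fin V, s (x1 i) (z i) * pcond κ t z x0 x1
      = (1 - κ t) * s (x1 i) (x0 i) := by
  have key : ∀ z : Fin L → Fin V, s (x1 i) (z i) * pcond κ t z x0 x1
      = ∏ j, ((if j = i then s (x1 i) (z j) else 1) *
          ((1 - κ t) * dlt (z j) (x0 j) + κ t * dlt (z j) (x1 j))) := by
    intro z
    rw [Finset.prod_mul_distrib, Finset.prod_ite_eq' univ i (fun j => s (x1 i) (z j))]
    simp [pcond]
  simp only [key]
  rw [← Fintype.prod_sum fun j b => (if j = i then s (x1 i) b else 1) *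
      ((1 - κ t) * dlt b (x0 j) + κ t * dlt b (x1 j))]
  have hone : ∀ j : Fin L, ∑ b, ((1 - κ t) * dlt b (x0 j) + κ t * dlt b (x1 j)) = 1 := by
    intro j
    rw [Finset.sum_add_distrib, ← Finset.mul_sum, ← Finset.mul_sum, sum_dlt, sum_dlt]
    ring
  rw [Finset.prod_eq_single i]
  · simp only [if_pos rfl]
    have : ∑ b, s (x1 i) b * ((1 - κ t) * dlt b (x0 i) + κ t * dlt b (x1 i))
        = (1 - κ t) * s (x1 i) (x0 i) := by
      have : ∀ b : Fin V, s (x1 i) b * ((1 - κ t) * dlt b (x0 i) + κ t * dlt b (x1 i))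
          = (1 - κ t) * (if b = x0 i then s (x1 i) (x0 i) else 0)
            + κ t * (if b = x1 i then s (x1 i) (x1 i) else 0) := by
        intro b
        unfold dlt
        split_ifs with h1 h2 h2 <;> simp_all <;> ring
      simp only [this, Finset.sum_add_distrib, ← Finset.mul_sum, Finset.sum_ite_eq',
        mem_univ, if_pos, hs0]
      ring
    simpa using this
  · intro j _ hj
    simp [hj, hone j]
  · intro h; exact absurd (mem_univ i) h

end Aux

lemma swap3 {α β γ M : Type*} [AddCommMonoid M] (sa : Finset α) (sb : Finset β)
    (sc : Finset γ) (F : α → β → γ → M) :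
    ∑ a ∈ sa, ∑ b ∈ sb, ∑ c ∈ sc, F a b c
      = ∑ b ∈ sb, ∑ c ∈ sc, ∑ a ∈ sa, F a b c := by
  rw [Finset.sum_comm]; exact Finset.sum_congr rfl fun b _ => Finset.sum_comm

lemma pointwise {V L : ℕ} (π : (Fin L → Fin V) × (Fin L → Fin V) → ℝ)
    (hπ : ∀ p, 0 ≤ π p) (κ : ℝ → ℝ) (t : ℝ) (h0 : 0 ≤ κ t) (h1 : κ t < 1)
    (s : Fin V → Fin V → ℝ) (hs0 : ∀ a, s a a = 0) :
    ∑ z, pmarg κ π t z *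
        ∑ i, ∑ a ∈ univ.filter (· ≠ z i), uvel κ π t i a z * s a (z i)
      = deriv κ t * ∑ x0, ∑ x1, (∑ i, s (x1 i) (x0 i)) * π (x0, x1) := by
  have hne : (1 : ℝ) - κ t ≠ 0 := by linarith
  have key : ∀ z x0 x1 : Fin L → Fin V,
      pmarg κ π t z * (pcond κ t z x0 x1 * π (x0, x1) / pmarg κ π t z)
        = pcond κ t z x0 x1 * π (x0, x1) := by
    intro z x0 x1
    rcases eq_or_ne (pmarg κ π t z) 0 with h | h
    · rw [h, pmarg_zero h0 (le_of_lt h1) π hπ h x0 x1]; simp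
    · field_simp
  calc
    ∑ z, pmarg κ π t z *
        ∑ i, ∑ a ∈ univ.filter (· ≠ z i), uvel κ π t i a z * s a (z i)
      = ∑ z, ∑ i, ∑ a ∈ univ.filter (· ≠ z i), ∑ x0, ∑ x1,
          deriv κ t / (1 - κ t) * ((dlt a (x1 i) - dlt a (z i)) * s a (z i)) *
            (pcond κ t z x0 x1 * π (x0, x1)) := by
        refine Finset.sum_congr rfl fun z _ => ?_
        rw [Finset.mul_sum]
        refine Finset.sum_congr rfl fun i _ => ?_
        rw [Finset.mul_sum]
        refine Finset.sum_congr rfl fun a _ => ?_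
        rw [uvel, Finset.sum_mul, Finset.mul_sum]
        refine Finset.sum_congr rfl fun x0 _ => ?_
        rw [Finset.sum_mul, Finset.mul_sum]
        refine Finset.sum_congr rfl fun x1 _ => ?_
        linear_combination (deriv κ t / (1 - κ t) *
          ((dlt a (x1 i) - dlt a (z i)) * s a (z i))) * key z x0 x1
    _ = ∑ z, ∑ i, ∑ x0, ∑ x1,
          deriv κ t / (1 - κ t) * (s (x1 i) (z i)) *
            (pcond κ t z x0 x1 * π (x0, x1)) := by
        refine Finset.sum_congr rfl fun z _ => Finset.sum_congr rfl fun i _ => ?_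
        rw [swap3]
        refine Finset.sum_congr rfl fun x0 _ => Finset.sum_congr rfl fun x1 _ => ?_
        rw [← asum s hs0 (z i) (x1 i), Finset.mul_sum, Finset.sum_mul]
    _ = ∑ i, ∑ x0, ∑ x1, ∑ z,
          deriv κ t / (1 - κ t) * (s (x1 i) (z i)) *
            (pcond κ t z x0 x1 * π (x0, x1)) := by
        rw [swap3]
        exact Finset.sum_congr rfl fun i _ => Finset.sum_congr rfl fun x0 _ =>
          Finset.sum_comm
    _ = ∑ i, ∑ x0, ∑ x1,
          ((1 - κ t) * s (x1 i) (x0 i)) * (deriv κ t / (1 - κ t) * π (x0, x1)) := by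
        refine Finset.sum_congr rfl fun i _ => Finset.sum_congr rfl fun x0 _ =>
          Finset.sum_congr rfl fun x1 _ => ?_
        rw [← zsum κ t s hs0 x0 x1 i, Finset.sum_mul]
        exact Finset.sum_congr rfl fun z _ => by ring
    _ = ∑ x0, ∑ x1, ∑ i,
          ((1 - κ t) * s (x1 i) (x0 i)) * (deriv κ t / (1 - κ t) * π (x0, x1)) := by
        rw [swap3]
    _ = deriv κ t * ∑ x0, ∑ x1, (∑ i, s (x1 i) (x0 i)) * π (x0, x1) := by
        rw [Finset.mul_sum]
        refine Finset.sum_congr rfl fun x0 _ => ?_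
        rw [Finset.mul_sum]
        refine Finset.sum_congr rfl fun x1 _ => ?_
        simp only [mul_assoc]
        rw [← Finset.mul_sum, ← Finset.sum_mul]
        field_simp

/-- **Theorem 1**: the dynamic transport cost of the convex interpolant discrete flow,
weighting each mass transition by the token dissimilarity `s`, equals the Kantorovich
transport cost with ground cost `c(x_0,x_1) = ∑ i, s(x_1^i, x_0^i)`. -/
theorem stmt8 {V L : ℕ} (π : (Fin L → Fin V) × (Fin L → Fin V) → ℝ)
    (hπ : ∀ p, 0 ≤ π p) (hπ1 : ∑ p, π p = 1)
    (κ : ℝ → ℝ) (hκ : ContDiffOn ℝ 1 κ (Set.Icc 0 1))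
    (hκ0 : κ 0 = 0) (hκ1 : κ 1 = 1)
    (hκmem : ∀ t ∈ Set.Icc (0:ℝ) 1, κ t ∈ Set.Icc (0:ℝ) 1)
    (hκlt : ∀ t ∈ Set.Ico (0:ℝ) 1, κ t < 1)
    (s : Fin V → Fin V → ℝ) (hs : ∀ a b, 0 ≤ s a b) (hs0 : ∀ a, s a a = 0) :
    (∫ t in (0:ℝ)..1, ∑ z, pmarg κ π t z *
        ∑ i, ∑ a ∈ univ.filter (· ≠ z i), uvel κ π t i a z * s a (z i))
      = ∑ x0, ∑ x1, (∑ i, s (x1 i) (x0 i)) * π (x0, x1) := by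
  have hae : ∀ᵐ t ∂(MeasureTheory.volume : MeasureTheory.Measure ℝ),
      t ∈ Set.uIoc (0:ℝ) 1 →
        (∑ z, pmarg κ π t z *
          ∑ i, ∑ a ∈ univ.filter (· ≠ z i), uvel κ π t i a z * s a (z i))
        = derivWithin κ (Set.Icc 0 1) t *
          ∑ x0, ∑ x1, (∑ i, s (x1 i) (x0 i)) * π (x0, x1) := by
    have hne : ∀ᵐ t ∂(MeasureTheory.volume : MeasureTheory.Measure ℝ), t ≠ 1 := by
      rw [MeasureTheory.ae_iff]
      simpa using Real.volume_singleton
    filter_upwards [hne] with t ht1 ht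
    rw [Set.uIoc_of_le zero_le_one] at ht
    have htoo : t ∈ Set.Ioo (0:ℝ) 1 := ⟨ht.1, lt_of_le_of_ne ht.2 ht1⟩
    have hnh : Set.Icc (0:ℝ) 1 ∈ nhds t := Icc_mem_nhds htoo.1 htoo.2
    rw [pointwise π hπ κ t (hκmem t (Set.Ioo_subset_Icc_self htoo)).1
        (hκlt t ⟨le_of_lt htoo.1, htoo.2⟩) s hs0, derivWithin_of_mem_nhds hnh]
  rw [intervalIntegral.integral_congr_ae hae]
  have hderivcont : ContinuousOn (fun t => derivWithin κ (Set.Icc 0 1) t)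
      (Set.Icc (0:ℝ) 1) := hκ.continuousOn_derivWithin (uniqueDiffOn_Icc one_pos) le_rfl
  have hint : IntervalIntegrable (fun t => derivWithin κ (Set.Icc 0 1) t)
      MeasureTheory.volume 0 1 := hderivcont.intervalIntegrable_of_Icc zero_le_one
  have hftc : ∫ t in (0:ℝ)..1, derivWithin κ (Set.Icc 0 1) t = κ 1 - κ 0 := by
    refine intervalIntegral.integral_eq_sub_of_hasDerivAt_of_le zero_le_one
      hκ.continuousOn (fun t ht => ?_) hint
    have hd : DifferentiableWithinAt ℝ κ (Set.Icc 0 1) t :=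
      (hκ.differentiableOn one_ne_zero) t (Set.Ioo_subset_Icc_self ht)
    exact hd.hasDerivWithinAt.hasDerivAt (Icc_mem_nhds ht.1 ht.2)
  rw [intervalIntegral.integral_mul_const, hftc, hκ1, hκ0]
  ring

end
end
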